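/- Let B be a pretriangulated category, C a category, and F ⊣ G an adjunction with F : B ⥤ C and unit η. Then the comparison functor Φ : B ⥤ Coalg(T) to the coalgebras over the induced comonad T on C is fully faithful if and only if for every object H of B the unit morphism η_H : H ⟶ G(F(H)) is a split monomorphism (admits a retraction). -/

import Mathlib

open CategoryTheory CategoryTheory.Limits CategoryTheory.Pretriangulated

universe v₁ v₂ u₁ u₂

/-- For an adjunction `F ⊣ G` with `F` defined on a pretriangulated category `B`, the
comparison functor to the coalgebras over the induced comonad is fully faithful iff
every unit morphism `η_H : H ⟶ G(F(H))` is a split monomorphism. -/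
theorem comparison_fullyFaithful_iff_unit_isSplitMono
    {B : Type u₁} [Category.{v₁} B] [HasZeroObject B] [HasShift B ℤ] [Preadditive B]
    [∀ n : ℤ, (shiftFunctor B n).Additive] [Pretriangulated B]
    {C : Type u₂} [Category.{v₂} C]
    (F : B ⥤ C) (G : C ⥤ B) (adj : F ⊣ G) :
    ((Comonad.comparison adj).Full ∧ (Comonad.comparison adj).Faithful) ↔
      ∀ H : B, IsSplitMono (adj.unit.app H) := by
  constructor
  · rintro ⟨hfull, hfaith⟩ H
    haveI : ((Comonad.comparison adj) ⋙ adj.toComonad.forget).Faithful :=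
      Functor.Faithful.comp _ _
    haveI : F.Faithful :=
      Functor.Faithful.of_iso (Comonad.comparisonForget adj)
    haveI : Mono (adj.unit.app H) := adj.unit_mono_of_L_faithful H
    exact isSplitMono_of_mono _
  · intro hsm
    have key : ∀ (H H' : B) (f : H ⟶ H'),
        f = adj.unit.app H ≫ G.map (F.map f) ≫ retraction (adj.unit.app H') := by
      intro H H' f
      rw [← Category.assoc, adj.unit_naturality f, Category.assoc,
        IsSplitMono.id (adj.unit.app H')]
      simp
    constructor
    · constructor
      intro H H' g
      refine ⟨adj.unit.app H ≫ G.map g.f ≫ @retraction _ _ _ _ (adj.unit.app H') (hsm H'), ?_⟩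
      ext
      have hg := g.h
      dsimp [Adjunction.toComonad, Comonad.comparison] at hg ⊢
      rw [F.map_comp, F.map_comp, ← Category.assoc, hg, Category.assoc, ← F.map_comp, IsSplitMono.id (adj.unit.app H')]
      simp
    · constructor
      intro H H' f g w
      have : F.map f = F.map g := congr_arg Comonad.Coalgebra.Hom.f w
      rw [key H H' f, key H H' g, this]
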